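/- Let H and K be complex Hilbert spaces, r ∈ ℝ₊, and let T₁, …, T_ℓ be d-tuples of bounded linear operators on H, with T_k = (T_{k1}, …, T_{kd}). Let X₁, …, X_ℓ : K → H be bounded linear operators with Σ_{k=1}^ℓ X_k* X_k = 1_K, and define the d-tuple S = (S₁, …, S_d) on K by S_j = Σ_{k=1}^ℓ X_k* T_{kj} X_k. If ρ(T_k) ≤ r for every k, then ρ(S) ≤ r; likewise, if ω(T_k) ≤ r for every k, then ω(S) ≤ r. In particular, any operator convex combination of Toeplitz-contractive d-tuples is Toeplitz-contractive. -/

import Mathlib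

open scoped ComplexOrder

noncomputable section

variable {H : Type*} [NormedAddCommGroup H] [InnerProductSpace ℂ H] [CompleteSpace H]

/-- The `(i, j)` entry of the `(d+1) × (d+1)` block Toeplitz operator matrix associated to a
`d`-tuple `T` of bounded operators on `H`, with diagonal entries `α • 1`: it is `α • 1` if
`i = j`, `T_{i-j}` if `i > j`, and `(T_{j-i})*` if `i < j`. -/
def tEntry {d : ℕ} (T : Fin d → H →L[ℂ] H) (α : ℂ) (i j : Fin (d + 1)) : H →L[ℂ] H :=
  if _h1 : (i : ℕ) = (j : ℕ) then α • (1 : H →L[ℂ] H)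
  else if _h2 : (j : ℕ) < (i : ℕ) then
    T ⟨(i : ℕ) - (j : ℕ) - 1, by have := i.isLt; omega⟩
  else
    ContinuousLinearMap.adjoint (T ⟨(j : ℕ) - (i : ℕ) - 1, by have := j.isLt; omega⟩)

/-- Positivity of a block operator matrix `M`, expressed through its quadratic form on the
direct sum of copies of `H`: for every vector `x = (x_i)`, `∑ i j, ⟪M i j (x j), x i⟫ ≥ 0`. -/
def IsPosBlockMatrix {ι : Type*} [Fintype ι] (M : ι → ι → (H →L[ℂ] H)) : Prop :=
  ∀ x : ι → H, 0 ≤ ∑ i, ∑ j, (inner ℂ (M i j (x j)) (x i) : ℂ)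

/-- A `d`-tuple of operators is Toeplitz-contractive if its block Toeplitz operator matrix
(with 1's on the diagonal) is a positive operator on `⊕_1^{d+1} H`. -/
def ToeplitzContractive {d : ℕ} (T : Fin d → H →L[ℂ] H) : Prop :=
  IsPosBlockMatrix (tEntry T 1)

/-- The Toeplitz modulus `ρ(T)` of a `d`-tuple `T`: the infimum of the `α ∈ ℝ₊` for which the
block Toeplitz operator matrix `𝒯_α` (with `α • 1` on the diagonal) is positive. -/
def toeplitzModulus {d : ℕ} (T : Fin d → H →L[ℂ] H) : ℝ :=
  sInf {α : ℝ | 0 ≤ α ∧ IsPosBlockMatrix (tEntry T (α : ℂ))}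

/-- The scalar `(d+1) × (d+1)` Toeplitz matrix `𝒯_{α,ξ}` obtained from the block Toeplitz
matrix of `T` by applying the vector state `X ↦ ⟨Xξ, ξ⟩` entrywise; for a unit vector `ξ`
its diagonal entries are `α`, its `(i,j)` entry for `i > j` is `⟨T_{i-j} ξ, ξ⟩`, and its
`(i,j)` entry for `i < j` is `⟨(T_{j-i})* ξ, ξ⟩`. -/
def tScalarMatrix {d : ℕ} (T : Fin d → H →L[ℂ] H) (α : ℝ) (ξ : H) :
    Matrix (Fin (d + 1)) (Fin (d + 1)) ℂ :=
  Matrix.of fun i j => (inner ℂ ξ (tEntry T (α : ℂ) i j ξ) : ℂ)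

/-- The Toeplitz numerical radius `ω(T)` of a `d`-tuple `T`: the infimum of the `α ∈ ℝ₊` for
which the scalar Toeplitz matrix `𝒯_{α,ξ}` is positive semidefinite for every unit vector `ξ`. -/
def toeplitzNumRadius {d : ℕ} (T : Fin d → H →L[ℂ] H) : ℝ :=
  sInf {α : ℝ | 0 ≤ α ∧ ∀ ξ : H, ‖ξ‖ = 1 → (tScalarMatrix T α ξ).PosSemidef}

variable {K : Type*} [NormedAddCommGroup K] [InnerProductSpace ℂ K] [CompleteSpace K]

namespace ToepAux
open ContinuousLinearMap in
lemma adjoint_tEntry {d : ℕ} (T : Fin d → H →L[ℂ] H) (α : ℝ) (i j : Fin (d + 1)) :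
    ContinuousLinearMap.adjoint (tEntry T (α : ℂ) i j) = tEntry T (α : ℂ) j i := by
  unfold tEntry
  rcases lt_trichotomy (i : ℕ) (j : ℕ) with h | h | h
  · rw [dif_neg (by omega), dif_neg (by omega), dif_neg (by omega), dif_pos h,
      ContinuousLinearMap.adjoint_adjoint]
  · rw [dif_pos h, dif_pos h.symm, ← ContinuousLinearMap.star_eq_adjoint, star_smul, star_one]
    norm_num
  · rw [dif_neg (by omega), dif_pos h, dif_neg (by omega), dif_neg (by omega)]

/-- The quadratic form of the block Toeplitz matrix. -/
def Qform {d : ℕ} (T : Fin d → H →L[ℂ] H) (α : ℝ) (x : Fin (d + 1) → H) : ℂ :=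
  ∑ i, ∑ j, (inner ℂ (tEntry T (α : ℂ) i j (x j)) (x i) : ℂ)

lemma isPos_iff {d : ℕ} (T : Fin d → H →L[ℂ] H) (α : ℝ) :
    IsPosBlockMatrix (tEntry T (α : ℂ)) ↔ ∀ x, 0 ≤ Qform T α x := Iff.rfl

lemma tEntry_split {d : ℕ} (T : Fin d → H →L[ℂ] H) (α β : ℝ) (i j : Fin (d + 1)) :
    tEntry T (β : ℂ) i j
      = tEntry T (α : ℂ) i j + if (i : ℕ) = (j : ℕ) then ((β - α : ℝ) : ℂ) • 1 else 0 := by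
  unfold tEntry
  by_cases h : (i : ℕ) = (j : ℕ)
  · rw [dif_pos h, dif_pos h, if_pos h, ← add_smul]
    push_cast; ring_nf
  · rw [dif_neg h, dif_neg h, if_neg h, add_zero]

lemma Qform_split {d : ℕ} (T : Fin d → H →L[ℂ] H) (α β : ℝ) (x : Fin (d + 1) → H) :
    Qform T β x = Qform T α x + ((β - α : ℝ) : ℂ) * ∑ i, ((‖x i‖ : ℝ) : ℂ) ^ 2 := by
  unfold Qform
  rw [Finset.mul_sum, ← Finset.sum_add_distrib]
  refine Finset.sum_congr rfl fun i _ => ?_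
  rw [show ∀ a b : ℂ, a + b = a + b from fun a b => rfl]
  have : ∀ j, (inner ℂ (tEntry T (β : ℂ) i j (x j)) (x i) : ℂ)
      = inner ℂ (tEntry T (α : ℂ) i j (x j)) (x i)
        + inner ℂ ((if (i : ℕ) = (j : ℕ) then ((β - α : ℝ) : ℂ) • (1 : H →L[ℂ] H) else 0) (x j))
            (x i) := by
    intro j
    rw [← inner_add_left, ← ContinuousLinearMap.add_apply, ← tEntry_split]
  rw [Finset.sum_congr rfl fun j _ => this j, Finset.sum_add_distrib]
  congr 1
  rw [Finset.sum_eq_single i]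
  · rw [if_pos rfl]
    simp [inner_smul_left, inner_self_eq_norm_sq_to_K]
    ring
  · intro j _ hji
    rw [if_neg (by simpa using fun h => hji (Fin.ext h.symm))]
    simp
  · simp

lemma Qform_conj {d : ℕ} (T : Fin d → H →L[ℂ] H) (α : ℝ) (x : Fin (d + 1) → H) :
    (starRingEnd ℂ) (Qform T α x) = Qform T α x := by
  unfold Qform
  rw [map_sum]
  have key : ∀ i, (starRingEnd ℂ) (∑ j, (inner ℂ (tEntry T (α : ℂ) i j (x j)) (x i) : ℂ))
      = ∑ j, (inner ℂ (tEntry T (α : ℂ) j i (x i)) (x j) : ℂ) := by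
    intro i
    rw [map_sum]
    refine Finset.sum_congr rfl fun j _ => ?_
    rw [inner_conj_symm, ← ContinuousLinearMap.adjoint_inner_left,
      ToepAux.adjoint_tEntry T α i j]
  rw [Finset.sum_congr rfl fun i _ => key i]
  exact Finset.sum_comm

lemma mul_norm_le_sum_sq {d : ℕ} (x : Fin (d + 1) → H) (i j : Fin (d + 1)) :
    ‖x j‖ * ‖x i‖ ≤ ∑ l, ‖x l‖ ^ 2 := by
  have hi : ‖x i‖ ^ 2 ≤ ∑ l, ‖x l‖ ^ 2 :=
    Finset.single_le_sum (f := fun l => ‖x l‖ ^ 2) (fun l _ => by positivity) (Finset.mem_univ i)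
  have hj : ‖x j‖ ^ 2 ≤ ∑ l, ‖x l‖ ^ 2 :=
    Finset.single_le_sum (f := fun l => ‖x l‖ ^ 2) (fun l _ => by positivity) (Finset.mem_univ j)
  nlinarith [sq_nonneg (‖x i‖ - ‖x j‖), norm_nonneg (x i), norm_nonneg (x j)]

lemma exists_isPos {d : ℕ} (T : Fin d → H →L[ℂ] H) :
    ∃ α : ℝ, 0 ≤ α ∧ IsPosBlockMatrix (tEntry T (α : ℂ)) := by
  set C : ℝ := ∑ i, ∑ j, ‖tEntry T (0 : ℂ) i j‖ with hC
  have hC0 : 0 ≤ C := Finset.sum_nonneg fun i _ => Finset.sum_nonneg fun j _ => norm_nonneg _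
  refine ⟨C, hC0, fun x => ?_⟩
  show (0 : ℂ) ≤ Qform T C x
  set Nr : ℝ := ∑ l, ‖x l‖ ^ 2 with hNr
  have hNr0 : 0 ≤ Nr := Finset.sum_nonneg fun l _ => by positivity
  have hsplit : Qform T C x = Qform T 0 x + ((C * Nr : ℝ) : ℂ) := by
    rw [Qform_split T 0 C x, sub_zero, hNr]
    push_cast
    ring
  have habs : ‖Qform T 0 x‖ ≤ C * Nr := by
    unfold Qform
    calc ‖∑ i, ∑ j, (inner ℂ (tEntry T ((0 : ℝ) : ℂ) i j (x j)) (x i) : ℂ)‖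
        ≤ ∑ i, ∑ j, ‖(inner ℂ (tEntry T ((0 : ℝ) : ℂ) i j (x j)) (x i) : ℂ)‖ := by
          refine (norm_sum_le _ _).trans (Finset.sum_le_sum fun i _ => norm_sum_le _ _)
      _ ≤ ∑ i, ∑ j, ‖tEntry T (0 : ℂ) i j‖ * Nr := by
          refine Finset.sum_le_sum fun i _ => Finset.sum_le_sum fun j _ => ?_
          calc ‖(inner ℂ (tEntry T ((0 : ℝ) : ℂ) i j (x j)) (x i) : ℂ)‖
              ≤ ‖tEntry T ((0 : ℝ) : ℂ) i j (x j)‖ * ‖x i‖ := norm_inner_le_norm _ _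
            _ ≤ (‖tEntry T (0 : ℂ) i j‖ * ‖x j‖) * ‖x i‖ := by
                have : ((0 : ℝ) : ℂ) = (0 : ℂ) := by norm_num
                rw [this]
                exact mul_le_mul_of_nonneg_right ((tEntry T 0 i j).le_opNorm _)
                  (norm_nonneg _)
            _ = ‖tEntry T (0 : ℂ) i j‖ * (‖x j‖ * ‖x i‖) := by ring
            _ ≤ ‖tEntry T (0 : ℂ) i j‖ * Nr :=
                mul_le_mul_of_nonneg_left (mul_norm_le_sum_sq x i j) (norm_nonneg _)
      _ = C * Nr := by rw [hC, Finset.sum_mul]; exact Finset.sum_congr rfl fun i _ =>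
            (Finset.sum_mul _ _ _).symm
  have him : (Qform T C x).im = 0 := Complex.conj_eq_iff_im.mp (Qform_conj T C x)
  rw [Complex.le_def]
  constructor
  · have h1 : |(Qform T 0 x).re| ≤ ‖Qform T 0 x‖ := Complex.abs_re_le_norm _
    rw [hsplit]
    simp only [Complex.add_re, Complex.ofReal_re, Complex.zero_re]
    have := abs_le.mp h1
    linarith
  · simp [him]

lemma isPos_mono {d : ℕ} (T : Fin d → H →L[ℂ] H) {α β : ℝ} (hαβ : α ≤ β)
    (h : IsPosBlockMatrix (tEntry T (α : ℂ))) : IsPosBlockMatrix (tEntry T (β : ℂ)) := by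
  intro x
  show (0 : ℂ) ≤ Qform T β x
  rw [Qform_split T α β x]
  have h1 : (0 : ℂ) ≤ Qform T α x := h x
  have h2 : (0 : ℂ) ≤ ((β - α : ℝ) : ℂ) * ∑ i, ((‖x i‖ : ℝ) : ℂ) ^ 2 := by
    have : ((β - α : ℝ) : ℂ) * ∑ i, ((‖x i‖ : ℝ) : ℂ) ^ 2
        = (((β - α) * ∑ i, ‖x i‖ ^ 2 : ℝ) : ℂ) := by push_cast; ring
    rw [this]
    rw [show (0 : ℂ) = ((0 : ℝ) : ℂ) by norm_num, Complex.real_le_real]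
    have : 0 ≤ ∑ i, ‖x i‖ ^ 2 := Finset.sum_nonneg fun i _ => by positivity
    nlinarith
  exact add_nonneg h1 h2

variable {K : Type*} [NormedAddCommGroup K] [InnerProductSpace ℂ K] [CompleteSpace K]

lemma tEntry_convex {d ℓ : ℕ} (α : ℂ)
    (T : Fin ℓ → Fin d → H →L[ℂ] H) (X : Fin ℓ → K →L[ℂ] H)
    (hX : ∑ k : Fin ℓ, (ContinuousLinearMap.adjoint (X k)).comp (X k) = 1)
    (i j : Fin (d + 1)) :
    tEntry (fun j : Fin d =>
        ∑ k : Fin ℓ, (ContinuousLinearMap.adjoint (X k)).comp ((T k j).comp (X k))) α i j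
      = ∑ k : Fin ℓ, (ContinuousLinearMap.adjoint (X k)).comp
          ((tEntry (T k) α i j).comp (X k)) := by
  unfold tEntry
  rcases lt_trichotomy (i : ℕ) (j : ℕ) with h | h | h
  · rw [dif_neg (by omega), dif_neg (by omega)]
    rw [map_sum]
    refine Finset.sum_congr rfl fun k _ => ?_
    rw [dif_neg (by omega), dif_neg (by omega)]
    simp only [ContinuousLinearMap.adjoint_comp, ContinuousLinearMap.adjoint_adjoint,
      ContinuousLinearMap.comp_assoc]
  · rw [dif_pos h]
    simp only [dif_pos h]
    have : ∀ k : Fin ℓ, (ContinuousLinearMap.adjoint (X k)).comp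
        ((α • (1 : H →L[ℂ] H)).comp (X k))
        = α • ((ContinuousLinearMap.adjoint (X k)).comp (X k)) := by
      intro k
      ext v
      simp
    rw [Finset.sum_congr rfl fun k _ => this k, ← Finset.smul_sum, hX]
  · rw [dif_neg (by omega), dif_pos h]
    refine Finset.sum_congr rfl fun k _ => ?_
    rw [dif_neg (by omega), dif_pos h]

lemma isPos_convex {d ℓ : ℕ} (α : ℝ)
    (T : Fin ℓ → Fin d → H →L[ℂ] H) (X : Fin ℓ → K →L[ℂ] H)
    (hX : ∑ k : Fin ℓ, (ContinuousLinearMap.adjoint (X k)).comp (X k) = 1)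
    (h : ∀ k, IsPosBlockMatrix (tEntry (T k) (α : ℂ))) :
    IsPosBlockMatrix (tEntry (fun j : Fin d =>
      ∑ k : Fin ℓ, (ContinuousLinearMap.adjoint (X k)).comp ((T k j).comp (X k))) (α : ℂ)) := by
  intro x
  have key : ∀ i j : Fin (d + 1),
      (inner ℂ ((tEntry (fun j : Fin d =>
        ∑ k : Fin ℓ, (ContinuousLinearMap.adjoint (X k)).comp ((T k j).comp (X k))) (α : ℂ) i j)
          (x j)) (x i) : ℂ)
      = ∑ k : Fin ℓ, (inner ℂ (tEntry (T k) (α : ℂ) i j (X k (x j))) (X k (x i)) : ℂ) := by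
    intro i j
    rw [tEntry_convex (α : ℂ) T X hX i j]
    rw [ContinuousLinearMap.sum_apply, sum_inner]
    refine Finset.sum_congr rfl fun k _ => ?_
    rw [ContinuousLinearMap.comp_apply, ContinuousLinearMap.comp_apply,
      ContinuousLinearMap.adjoint_inner_left]
  calc (0 : ℂ) ≤ ∑ k : Fin ℓ, ∑ i, ∑ j,
        (inner ℂ (tEntry (T k) (α : ℂ) i j (X k (x j))) (X k (x i)) : ℂ) :=
        Finset.sum_nonneg fun k _ => h k (fun i => X k (x i))
    _ = ∑ i, ∑ j, ∑ k : Fin ℓ,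
        (inner ℂ (tEntry (T k) (α : ℂ) i j (X k (x j))) (X k (x i)) : ℂ) := by
        rw [Finset.sum_comm]
        refine Finset.sum_congr rfl fun i _ => Finset.sum_comm
    _ = _ := by
        refine Finset.sum_congr rfl fun i _ => Finset.sum_congr rfl fun j _ => (key i j).symm

lemma tScalar_herm {d : ℕ} (T : Fin d → H →L[ℂ] H) (α : ℝ) (ξ : H) :
    (tScalarMatrix T α ξ).IsHermitian := by
  ext i j
  simp only [tScalarMatrix, Matrix.conjTranspose_apply, Matrix.of_apply, RCLike.star_def]
  rw [inner_conj_symm, ← adjoint_tEntry T α i j, ContinuousLinearMap.adjoint_inner_left]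

lemma tScalar_dotProduct {d : ℕ} (T : Fin d → H →L[ℂ] H) (α : ℝ) (ξ : H)
    (x : Fin (d + 1) → ℂ) :
    dotProduct (star x) ((tScalarMatrix T α ξ).mulVec x)
      = Qform T α (fun i => x i • ξ) := by
  unfold Qform
  calc dotProduct (star x) ((tScalarMatrix T α ξ).mulVec x)
      = ∑ i, ∑ j, (starRingEnd ℂ) (x i) * x j
          * (inner ℂ ξ (tEntry T (α : ℂ) i j ξ) : ℂ) := by
        simp only [dotProduct, Matrix.mulVec, tScalarMatrix,
          Matrix.of_apply, Pi.star_apply, RCLike.star_def, Finset.mul_sum]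
        exact Finset.sum_congr rfl fun i _ => Finset.sum_congr rfl fun j _ => by ring
    _ = ∑ i, ∑ j, (starRingEnd ℂ) (x i) * x j
          * (inner ℂ (tEntry T (α : ℂ) j i ξ) ξ : ℂ) := by
        refine Finset.sum_congr rfl fun i _ => Finset.sum_congr rfl fun j _ => ?_
        rw [← ContinuousLinearMap.adjoint_inner_left, adjoint_tEntry T α i j]
    _ = ∑ j, ∑ i, (starRingEnd ℂ) (x i) * x j
          * (inner ℂ (tEntry T (α : ℂ) j i ξ) ξ : ℂ) := Finset.sum_comm
    _ = ∑ i, ∑ j, (inner ℂ (tEntry T (α : ℂ) i j (x j • ξ)) (x i • ξ) : ℂ) := by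
        refine Finset.sum_congr rfl fun i _ => Finset.sum_congr rfl fun j _ => ?_
        rw [map_smul, inner_smul_left, inner_smul_right]
        ring

lemma tScalar_psd_of_isPos {d : ℕ} (T : Fin d → H →L[ℂ] H) (α : ℝ)
    (h : IsPosBlockMatrix (tEntry T (α : ℂ))) (ξ : H) :
    (tScalarMatrix T α ξ).PosSemidef := by
  refine Matrix.PosSemidef.of_dotProduct_mulVec_nonneg (tScalar_herm T α ξ) fun x => ?_
  rw [show dotProduct (star x) ((tScalarMatrix T α ξ).mulVec x)
      = Qform T α (fun i => x i • ξ) from tScalar_dotProduct T α ξ x]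
  exact h _

lemma tScalar_psd_of_unit {d : ℕ} (T : Fin d → H →L[ℂ] H) (α : ℝ)
    (h : ∀ ξ : H, ‖ξ‖ = 1 → (tScalarMatrix T α ξ).PosSemidef) (η : H) :
    (tScalarMatrix T α η).PosSemidef := by
  rcases eq_or_ne η 0 with rfl | hη
  · have h0 : tScalarMatrix T α (0 : H) = 0 := by
      ext i j
      simp [tScalarMatrix]
    rw [h0]
    exact Matrix.PosSemidef.zero
  · have hn : ‖η‖ ≠ 0 := norm_ne_zero_iff.mpr hη
    have hnC : ((‖η‖ : ℝ) : ℂ) ≠ 0 := by simpa using hn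
    set ξ : H := (((‖η‖ : ℝ) : ℂ))⁻¹ • η with hξ
    have hξ1 : ‖ξ‖ = 1 := by
      rw [hξ, norm_smul, norm_inv, Complex.norm_real, Real.norm_eq_abs, abs_of_nonneg
        (norm_nonneg η), inv_mul_cancel₀ hn]
    have key : tScalarMatrix T α η = (((‖η‖ ^ 2 : ℝ)) : ℂ) • tScalarMatrix T α ξ := by
      ext i j
      simp only [tScalarMatrix, Matrix.of_apply, Matrix.smul_apply, smul_eq_mul, hξ]
      rw [map_smul, inner_smul_left, inner_smul_right]
      rw [map_inv₀, Complex.conj_ofReal]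
      field_simp
      push_cast; ring
    rw [key]
    have hpsd := h ξ hξ1
    have hr : (0 : ℝ) ≤ ‖η‖ ^ 2 := by positivity
    refine Matrix.PosSemidef.of_dotProduct_mulVec_nonneg ?_ fun x => ?_
    · unfold Matrix.IsHermitian
      rw [Matrix.conjTranspose_smul, hpsd.1.eq]
      congr 1
      exact Complex.conj_ofReal _
    · rw [Matrix.smul_mulVec, dotProduct_smul, smul_eq_mul]
      exact mul_nonneg
        (by rw [show (0 : ℂ) = ((0 : ℝ) : ℂ) by norm_num, Complex.real_le_real]; exact hr)
        (hpsd.dotProduct_mulVec_nonneg x)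


lemma tScalar_mono {d : ℕ} (T : Fin d → H →L[ℂ] H) {α β : ℝ} (hαβ : α ≤ β)
    (ξ : H) (hξ : ‖ξ‖ = 1) (h : (tScalarMatrix T α ξ).PosSemidef) :
    (tScalarMatrix T β ξ).PosSemidef := by
  have key : tScalarMatrix T β ξ
      = tScalarMatrix T α ξ
        + Matrix.diagonal (fun _ : Fin (d + 1) => (((β - α : ℝ)) : ℂ)) := by
    ext i j
    simp only [tScalarMatrix, Matrix.of_apply, Matrix.add_apply, Matrix.diagonal_apply]
    rw [tEntry_split T α β i j, ContinuousLinearMap.add_apply, inner_add_right]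
    congr 1
    by_cases hij : (i : ℕ) = (j : ℕ)
    · rw [if_pos hij, if_pos (Fin.ext hij)]
      simp only [ContinuousLinearMap.smul_apply, ContinuousLinearMap.one_apply,
        inner_smul_right]
      rw [show (inner ℂ ξ ξ : ℂ) = ((‖ξ‖ : ℝ) : ℂ) ^ 2 from inner_self_eq_norm_sq_to_K ξ, hξ]
      norm_num
    · rw [if_neg hij, if_neg (fun hc : i = j => hij (congrArg Fin.val hc))]
      simp
  rw [key]
  refine h.add (Matrix.PosSemidef.diagonal fun i => ?_)
  show (0 : ℂ) ≤ (((β - α : ℝ)) : ℂ)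
  rw [show (0 : ℂ) = (((0 : ℝ)) : ℂ) by norm_num, Complex.real_le_real]
  linarith

variable {K : Type*} [NormedAddCommGroup K] [InnerProductSpace ℂ K] [CompleteSpace K] in
lemma tScalar_convex {d ℓ : ℕ} (α : ℝ)
    (T : Fin ℓ → Fin d → H →L[ℂ] H) (X : Fin ℓ → K →L[ℂ] H)
    (hX : ∑ k : Fin ℓ, (ContinuousLinearMap.adjoint (X k)).comp (X k) = 1) (ξ : K) :
    tScalarMatrix (fun j : Fin d =>
        ∑ k : Fin ℓ, (ContinuousLinearMap.adjoint (X k)).comp ((T k j).comp (X k))) α ξ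
      = ∑ k : Fin ℓ, tScalarMatrix (T k) α (X k ξ) := by
  ext i j
  simp only [tScalarMatrix, Matrix.of_apply, Matrix.sum_apply]
  rw [tEntry_convex (α : ℂ) T X hX i j, ContinuousLinearMap.sum_apply, inner_sum]
  refine Finset.sum_congr rfl fun k _ => ?_
  rw [ContinuousLinearMap.comp_apply, ContinuousLinearMap.comp_apply,
    ContinuousLinearMap.adjoint_inner_right]

lemma sInf_le_aux {ℓ : ℕ} (A : Fin ℓ → Set ℝ) (B : Set ℝ) (r : ℝ) (hr : 0 ≤ r)
    (hB0 : ∀ b ∈ B, (0 : ℝ) ≤ b)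
    (hA0 : ∀ k, ∀ a ∈ A k, (0 : ℝ) ≤ a)
    (hAne : ∀ k, (A k).Nonempty)
    (hup : ∀ k, ∀ a ∈ A k, ∀ b, a ≤ b → b ∈ A k)
    (hconv : ∀ α : ℝ, 0 ≤ α → (∀ k, α ∈ A k) → α ∈ B)
    (hle : ∀ k, sInf (A k) ≤ r) : sInf B ≤ r := by
  refine le_of_forall_pos_le_add fun ε hε => ?_
  have hmem : (r + ε) ∈ B := by
    refine hconv _ (by linarith) fun k => ?_
    have hlt : sInf (A k) < r + ε := lt_of_le_of_lt (hle k) (by linarith)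
    obtain ⟨a, haA, ha⟩ :=
      (csInf_lt_iff ⟨0, fun a ha => hA0 k a ha⟩ (hAne k)).mp hlt
    exact hup k a haA _ ha.le
  exact csInf_le ⟨0, fun b hb => hB0 b hb⟩ hmem

end ToepAux

/-- operator convex combinations. If `X₁, …, X_ℓ : K → H` satisfy
`∑ₖ Xₖ* Xₖ = 1_K` and `S_j = ∑ₖ Xₖ* T_{kj} Xₖ`, then `ρ(Tₖ) ≤ r` for all `k` implies
`ρ(S) ≤ r`, and `ω(Tₖ) ≤ r` for all `k` implies `ω(S) ≤ r`; in particular an operator convex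
combination of Toeplitz-contractive `d`-tuples is Toeplitz-contractive. -/
theorem toeplitz_operator_convex_combination
    {d ℓ : ℕ} (r : ℝ) (hr : 0 ≤ r)
    (T : Fin ℓ → Fin d → H →L[ℂ] H) (X : Fin ℓ → K →L[ℂ] H)
    (hX : ∑ k : Fin ℓ, (ContinuousLinearMap.adjoint (X k)).comp (X k) = 1) :
    ((∀ k : Fin ℓ, toeplitzModulus (T k) ≤ r) →
        toeplitzModulus (fun j : Fin d =>
          ∑ k : Fin ℓ, (ContinuousLinearMap.adjoint (X k)).comp ((T k j).comp (X k))) ≤ r) ∧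
    ((∀ k : Fin ℓ, toeplitzNumRadius (T k) ≤ r) →
        toeplitzNumRadius (fun j : Fin d =>
          ∑ k : Fin ℓ, (ContinuousLinearMap.adjoint (X k)).comp ((T k j).comp (X k))) ≤ r) ∧
    ((∀ k : Fin ℓ, ToeplitzContractive (T k)) →
        ToeplitzContractive (fun j : Fin d =>
          ∑ k : Fin ℓ, (ContinuousLinearMap.adjoint (X k)).comp ((T k j).comp (X k)))) := by
  refine ⟨?_, ?_, ?_⟩
  · intro hk
    unfold toeplitzModulus
    exact ToepAux.sInf_le_aux
      (fun k => {α : ℝ | 0 ≤ α ∧ IsPosBlockMatrix (tEntry (T k) (α : ℂ))})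
      _ r hr (fun b hb => hb.1) (fun k a ha => ha.1)
      (fun k => ToepAux.exists_isPos (T k))
      (fun k a ha b hab => ⟨ha.1.trans hab, ToepAux.isPos_mono (T k) hab ha.2⟩)
      (fun α hα hall => ⟨hα, ToepAux.isPos_convex α T X hX fun k => (hall k).2⟩)
      hk
  · intro hk
    unfold toeplitzNumRadius
    refine ToepAux.sInf_le_aux
      (fun k => {α : ℝ | 0 ≤ α ∧ ∀ ξ : H, ‖ξ‖ = 1 → (tScalarMatrix (T k) α ξ).PosSemidef})
      _ r hr (fun b hb => hb.1) (fun k a ha => ha.1)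
      (fun k => ?_)
      (fun k a ha b hab =>
        ⟨ha.1.trans hab, fun ξ hξ => ToepAux.tScalar_mono (T k) hab ξ hξ (ha.2 ξ hξ)⟩)
      (fun α hα hall => ⟨hα, fun ξ hξ => ?_⟩)
      hk
    · obtain ⟨α, hα0, hpos⟩ := ToepAux.exists_isPos (T k)
      exact ⟨α, hα0, fun ξ _ => ToepAux.tScalar_psd_of_isPos (T k) α hpos ξ⟩
    · rw [ToepAux.tScalar_convex α T X hX ξ]
      refine Finset.sum_induction _ Matrix.PosSemidef
        (fun a b ha hb => ha.add hb) Matrix.PosSemidef.zero fun k _ => ?_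
      exact ToepAux.tScalar_psd_of_unit (T k) α (fun η hη => (hall k).2 η hη) (X k ξ)
  · intro hk
    unfold ToeplitzContractive
    have h := ToepAux.isPos_convex (1 : ℝ) T X hX (fun k => by
      have hc := hk k
      unfold ToeplitzContractive at hc
      rwa [show ((1 : ℝ) : ℂ) = 1 from Complex.ofReal_one])
    rwa [show ((1 : ℝ) : ℂ) = 1 from Complex.ofReal_one] at h
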